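/- Fix an integer m ≥ 1, set x(t) = cos(2t) and y(t) = cos((2m+1)t + 1/2), and let k be an integer with 1 ≤ k ≤ 2m. Let t₁ = (2(2m+1) − 2k)π/(2(2m+1)) and t₂ = (2(2m+1) + 2k)π/(2(2m+1)) be the Type II double-point times with j = 2. Then x′(t₁) = −x′(t₂) = 2 sin(2kπ/(2m+1)) and y′(t₁) = y′(t₂) = (−1)^k (2m+1) sin(1/2), where x′ and y′ denote the derivatives of x and y. -/

import Mathlib

open Real

lemma deriv_cos_lin (a b t : ℝ) :
    deriv (fun t => Real.cos (a * t + b)) t = -Real.sin (a * t + b) * a := by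
  have h : HasDerivAt (fun t => Real.cos (a * t + b)) (-Real.sin (a * t + b) * a) t := by
    have h1 : HasDerivAt (fun t : ℝ => a * t + b) a t := by
      simpa using ((hasDerivAt_id t).const_mul a).add_const b
    exact h1.cos
  exact h.deriv

lemma neg_one_zpow_sub (n k : ℤ) : ((-1 : ℝ) ^ (n - k)) * (-1 : ℝ) ^ k = (-1 : ℝ) ^ n := by
  rw [← zpow_add₀ (by norm_num : (-1 : ℝ) ≠ 0)]
  ring_nf

/-- Derivative values of `x(t) = cos 2t` and `y(t) = cos((2m+1)t + 1/2)` at the Type II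
double-point times with `j = 2`: `x′(t₁) = −x′(t₂) = 2 sin(2kπ/(2m+1))` and
`y′(t₁) = y′(t₂) = (−1)^k (2m+1) sin(1/2)`. -/
theorem typeII_j2_derivative_values
    (m k : ℤ) (hm : 1 ≤ m) (hk1 : 1 ≤ k) (hk2 : k ≤ 2 * m)
    (x y : ℝ → ℝ)
    (hx : ∀ t, x t = Real.cos (2 * t))
    (hy : ∀ t, y t = Real.cos ((2 * (m : ℝ) + 1) * t + 1 / 2))
    (t₁ t₂ : ℝ)
    (ht₁ : t₁ = (2 * (2 * (m : ℝ) + 1) - 2 * (k : ℝ)) * π / (2 * (2 * (m : ℝ) + 1)))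
    (ht₂ : t₂ = (2 * (2 * (m : ℝ) + 1) + 2 * (k : ℝ)) * π / (2 * (2 * (m : ℝ) + 1))) :
    deriv x t₁ = -deriv x t₂ ∧
    deriv x t₁ = 2 * Real.sin (2 * (k : ℝ) * π / (2 * (m : ℝ) + 1)) ∧
    deriv y t₁ = deriv y t₂ ∧
    deriv y t₁ = (-1 : ℝ) ^ k * (2 * (m : ℝ) + 1) * Real.sin (1 / 2) := by
  have hxf : x = fun t => Real.cos (2 * t + 0) := by funext t; simp [hx t]
  set N : ℝ := 2 * (m : ℝ) + 1 with hN
  have hyf : y = fun t => Real.cos (N * t + 1 / 2) := by funext t; simp [hy t]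
  have hm' : (1 : ℝ) ≤ (m : ℝ) := by exact_mod_cast hm
  have hNpos : (0 : ℝ) < N := by rw [hN]; linarith
  have hNne : N ≠ 0 := ne_of_gt hNpos
  -- key angle identities
  have h2t₁ : 2 * t₁ + 0 = 2 * π - 2 * (k : ℝ) * π / N := by
    rw [ht₁]; field_simp; ring
  have h2t₂ : 2 * t₂ + 0 = 2 * π + 2 * (k : ℝ) * π / N := by
    rw [ht₂]; field_simp; ring
  have hnt₁ : N * t₁ + 1 / 2 = 1 / 2 + ((2 * m + 1 - k : ℤ) : ℝ) * π := by
    rw [ht₁]; push_cast; field_simp; ring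
  have hnt₂ : N * t₂ + 1 / 2 = 1 / 2 + ((2 * m + 1 + k : ℤ) : ℝ) * π := by
    rw [ht₂]; push_cast; field_simp; ring
  have hsin₁ : Real.sin (2 * t₁ + 0) = -Real.sin (2 * (k : ℝ) * π / N) := by
    rw [h2t₁, Real.sin_sub]; simp
  have hsin₂ : Real.sin (2 * t₂ + 0) = Real.sin (2 * (k : ℝ) * π / N) := by
    rw [h2t₂, Real.sin_add]; simp
  have hodd : ((-1 : ℝ) ^ (2 * m + 1) : ℝ) = -1 := by
    have : Odd (2 * m + 1) := ⟨m, by ring⟩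
    exact this.neg_one_zpow
  have hk2' : ((-1 : ℝ) ^ k) * ((-1 : ℝ) ^ k) = 1 := by
    rw [← zpow_add₀ (by norm_num : (-1 : ℝ) ≠ 0)]
    have : Even (k + k) := ⟨k, rfl⟩
    exact this.neg_one_zpow
  have hs₁ : Real.sin (N * t₁ + 1 / 2) = -((-1 : ℝ) ^ k * Real.sin (1 / 2)) := by
    rw [hnt₁, Real.sin_add_int_mul_pi]
    have h := neg_one_zpow_sub (2 * m + 1) k
    have : (-1 : ℝ) ^ (2 * m + 1 - k) = -(-1 : ℝ) ^ k := by
      have h2 := congrArg (· * ((-1 : ℝ) ^ k)) h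
      rw [mul_assoc, hk2', mul_one, hodd] at h2
      rw [h2]; nlinarith [hk2']
    rw [this]; ring
  have hs₂ : Real.sin (N * t₂ + 1 / 2) = -((-1 : ℝ) ^ k * Real.sin (1 / 2)) := by
    rw [hnt₂, Real.sin_add_int_mul_pi]
    have : (-1 : ℝ) ^ (2 * m + 1 + k) = -(-1 : ℝ) ^ k := by
      rw [zpow_add₀ (by norm_num : (-1 : ℝ) ≠ 0), hodd]; ring
    rw [this]; ring
  refine ⟨?_, ?_, ?_, ?_⟩
  · rw [hxf, deriv_cos_lin, deriv_cos_lin, hsin₁, hsin₂]; ring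
  · rw [hxf, deriv_cos_lin, hsin₁]; ring
  · rw [hyf, deriv_cos_lin, deriv_cos_lin, hs₁, hs₂]
  · rw [hyf, deriv_cos_lin, hs₁]; ring
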